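/- For positive bounded linear operators S and T on a complex Hilbert space, ‖ST + TS‖ ≤ ‖S² + T²‖. -/

import Mathlib

variable {H : Type*} [NormedAddCommGroup H] [InnerProductSpace ℂ H] [CompleteSpace H]

/-- The numerical radius of a bounded linear operator. -/
noncomputable def numRadius (A : H →L[ℂ] H) : ℝ :=
  ⨆ x : {x : H // ‖x‖ = 1}, ‖(inner ℂ (A x) (x : H) : ℂ)‖

/-- The absolute value |A| = (A*A)^(1/2). -/
noncomputable def absOp (A : H →L[ℂ] H) : H →L[ℂ] H :=
  CFC.sqrt (ContinuousLinearMap.adjoint A * A)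

/-- Real powers of an operator via continuous functional calculus. -/
noncomputable def opRpow (T : H →L[ℂ] H) (r : ℝ) : H →L[ℂ] H :=
  cfc (fun t : ℝ => t ^ r) T

/-- For selfadjoint `a` in a C⋆-algebra with `-b ≤ a ≤ b`, we have `‖a‖ ≤ ‖b‖`. -/
lemma norm_le_norm_of_neg_le_of_le {A : Type*} [CStarAlgebra A] [PartialOrder A]
    [StarOrderedRing A] {a b : A} (ha : IsSelfAdjoint a) (h1 : -b ≤ a) (h2 : a ≤ b) :
    ‖a‖ ≤ ‖b‖ := by
  obtain (hsub | hn) := subsingleton_or_nontrivial A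
  · simp [Subsingleton.elim a 0]
  have hb : IsSelfAdjoint b := by
    have := ha.neg
    have h3 : IsSelfAdjoint (b - a) := by
      have hba : 0 ≤ b - a := sub_nonneg.mpr h2
      exact .of_nonneg hba
    simpa using h3.add ha
  have hble : b ≤ algebraMap ℝ A ‖b‖ := hb.le_algebraMap_norm_self
  have hnble : -(algebraMap ℝ A ‖b‖) ≤ -b := neg_le_neg hble
  have hup : a ≤ algebraMap ℝ A ‖b‖ := h2.trans hble
  have hlow : -(algebraMap ℝ A ‖b‖) ≤ a := hnble.trans h1
  rw [le_algebraMap_iff_spectrum_le (ha := ha)] at hup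
  rw [← map_neg, algebraMap_le_iff_le_spectrum (ha := ha)] at hlow
  rcases CStarAlgebra.norm_or_neg_norm_mem_spectrum ha with h | h
  · exact hup _ h
  · have := hlow _ h
    linarith

theorem stmt17 (S T : H →L[ℂ] H) (hS : 0 ≤ S) (hT : 0 ≤ T) :
    ‖S * T + T * S‖ ≤ ‖S^2 + T^2‖ := by
  have hS' : IsSelfAdjoint S := .of_nonneg hS
  have hT' : IsSelfAdjoint T := .of_nonneg hT
  have ha : IsSelfAdjoint (S * T + T * S) := by
    rw [IsSelfAdjoint, star_add, star_mul, star_mul, hS'.star_eq, hT'.star_eq, add_comm]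
  have hsub : (S - T) ^ 2 = S ^ 2 + T ^ 2 - (S * T + T * S) := by noncomm_ring
  have hadd : (S + T) ^ 2 = S ^ 2 + T ^ 2 + (S * T + T * S) := by noncomm_ring
  have h2 : S * T + T * S ≤ S ^ 2 + T ^ 2 := by
    have := (hS'.sub hT').sq_nonneg
    rw [hsub] at this
    exact sub_nonneg.mp this
  have h1 : -(S ^ 2 + T ^ 2) ≤ S * T + T * S := by
    have := (hS'.add hT').sq_nonneg
    rw [hadd] at this
    exact sub_nonneg.mp (by rwa [sub_neg_eq_add, add_comm])
  exact norm_le_norm_of_neg_le_of_le ha h1 h2
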